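/- The ring of integers ℤ is Σ-strongly clean but is not n-strongly clean for any fixed positive integer n. -/

import Mathlib

/-- `x` is a sum of an idempotent and `n` units, the idempotent commuting with each unit. -/
def IsNStronglyClean {R : Type*} [Ring R] (n : ℕ) (x : R) : Prop :=
  ∃ (e : R) (u : Fin n → Rˣ), IsIdempotentElem e ∧ (∀ i, Commute e (u i)) ∧
    x = e + ∑ i, (u i : R)

/-- A ring is `n`-strongly clean if every element is `n`-strongly clean. -/
def IsNStronglyCleanRing (R : Type*) [Ring R] (n : ℕ) : Prop :=
  ∀ x : R, IsNStronglyClean n x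

lemma step_clean {x : ℤ} {n : ℕ} (v : ℤˣ) (h : IsNStronglyClean n x) :
    IsNStronglyClean (n + 1) (x + (v : ℤ)) := by
  obtain ⟨e, u, he, hc, hx⟩ := h
  refine ⟨e, Fin.cons v u, he, fun i => mul_comm _ _, ?_⟩
  rw [hx]
  simp [Fin.sum_univ_succ]
  ring

lemma sigma_clean : ∀ x : ℤ, ∃ n : ℕ, 0 < n ∧ IsNStronglyClean n x := by
  intro x
  induction x using Int.induction_on with
  | zero =>
    refine ⟨2, by norm_num, 0, ![1, -1], ?_, fun i => mul_comm _ _, ?_⟩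
    · simp [IsIdempotentElem]
    · decide
  | succ i ih =>
    obtain ⟨n, hn, h⟩ := ih
    exact ⟨n + 1, Nat.succ_pos n, step_clean 1 h⟩
  | pred i ih =>
    obtain ⟨n, hn, h⟩ := ih
    have := step_clean (-1) h
    exact ⟨n + 1, Nat.succ_pos n, by simpa [sub_eq_add_neg] using this⟩

theorem int_sigma_strongly_clean_not_n :
    (∀ x : ℤ, ∃ n : ℕ, 0 < n ∧ IsNStronglyClean n x) ∧
      ∀ n : ℕ, 0 < n → ¬ IsNStronglyCleanRing ℤ n := by
  refine ⟨sigma_clean, fun n _ h => ?_⟩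
  obtain ⟨e, u, he, _, hx⟩ := h ((n : ℤ) + 2)
  have he' : e ≤ 1 := by
    have : e * (e - 1) = 0 := by
      have := he; unfold IsIdempotentElem at this; ring_nf; linarith [this]
    rcases mul_eq_zero.mp this with h0 | h1
    · simp [h0]
    · have : e = 1 := by linarith
      simp [this]
  have hsum : (∑ i, ((u i : ℤ))) ≤ n := by
    calc (∑ i, ((u i : ℤ))) ≤ ∑ _i : Fin n, (1 : ℤ) := by
          apply Finset.sum_le_sum
          intro i _
          rcases Int.units_eq_one_or (u i) with h1 | h1 <;> simp [h1]
      _ = n := by simp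
  omega
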